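/- For an integer k ≥ 2, the set of θ in (0, π) satisfying sin(kθ)/sin((k-1)θ) < 0 equals the union over l = 1, ..., k-1 of the open intervals (lπ/k, lπ/(k-1)). -/

import Mathlib

set_option maxHeartbeats 1000000

open Real

lemma sign_sin_int (l : ℤ) (x : ℝ) (h1 : l * π < x) (h2 : x < (l+1) * π) :
    0 < (-1:ℝ)^l * Real.sin x := by
  have hs : Real.sin x = (-1:ℝ)^l * Real.sin (x - l*π) := by
    have := Real.sin_add_int_mul_pi (x - l*π) l
    simpa using this
  have hpos : 0 < Real.sin (x - l*π) := by
    apply Real.sin_pos_of_pos_of_lt_pi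
    · linarith
    · have : (l+1) * π = l*π + π := by ring
      linarith [h2.trans_eq this]
  rw [hs, ← mul_assoc, ← zpow_add₀ (by norm_num : (-1:ℝ) ≠ 0), ← two_mul]
  have : ((-1:ℝ))^(2*l) = 1 := by
    rw [zpow_mul]; norm_num
  rw [this, one_mul]; exact hpos

lemma floor_mem (x : ℝ) (hne : Real.sin x ≠ 0) :
    (⌊x/π⌋ : ℝ) * π < x ∧ x < (⌊x/π⌋ + 1 : ℝ) * π := by
  have hπ := Real.pi_pos
  constructor
  · rcases lt_or_eq_of_le ((Int.floor_le (x/π)).trans_eq rfl) with h | h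
    · calc (⌊x/π⌋:ℝ) * π < (x/π) * π := by nlinarith
        _ = x := by field_simp
    · exfalso; apply hne
      have : x = (⌊x/π⌋:ℝ) * π := by rw [h]; field_simp
      rw [this]; exact_mod_cast Real.sin_int_mul_pi _
  · have := Int.lt_floor_add_one (x/π)
    calc x = (x/π) * π := by field_simp
      _ < (⌊x/π⌋ + 1 : ℝ) * π := by push_cast; nlinarith

open Real in
theorem sin_ratio_neg_solution_set (k : ℕ) (hk : 2 ≤ k) :
    {θ : ℝ | θ ∈ Set.Ioo 0 π ∧ Real.sin (k * θ) / Real.sin ((k - 1 : ℝ) * θ) < 0} =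
      ⋃ l ∈ Finset.Icc 1 (k - 1), Set.Ioo ((l : ℝ) * π / k) ((l : ℝ) * π / (k - 1 : ℝ)) := by
  have hπ := Real.pi_pos
  have hk2 : (2:ℝ) ≤ (k:ℝ) := by exact_mod_cast hk
  have hkR : (0:ℝ) < k := by linarith
  have hk1R : (0:ℝ) < (k:ℝ) - 1 := by linarith
  ext θ
  simp only [Set.mem_setOf_eq, Set.mem_iUnion, Set.mem_Ioo, Finset.mem_Icc, exists_prop]
  constructor
  · rintro ⟨⟨hθ0, hθπ⟩, hlt⟩
    have hne1 : Real.sin (k*θ) ≠ 0 := by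
      intro h; rw [h] at hlt; simp at hlt
    have hne2 : Real.sin ((k-1:ℝ)*θ) ≠ 0 := by
      intro h; rw [h] at hlt; simp at hlt
    set l : ℤ := ⌊(k*θ)/π⌋ with hl
    set m : ℤ := ⌊((k-1:ℝ)*θ)/π⌋ with hm
    obtain ⟨hl1, hl2⟩ := floor_mem (k*θ) hne1
    obtain ⟨hm1, hm2⟩ := floor_mem ((k-1:ℝ)*θ) hne2
    have hsl := sign_sin_int l (k*θ) hl1 hl2
    have hsm := sign_sin_int m ((k-1:ℝ)*θ) hm1 hm2
    have hprod : Real.sin (k*θ) * Real.sin ((k-1:ℝ)*θ) < 0 := by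
      rcases div_neg_iff.mp hlt with ⟨h1,h2⟩|⟨h1,h2⟩ <;> nlinarith
    have hsign : (-1:ℝ)^(l+m) * (Real.sin (k*θ) * Real.sin ((k-1:ℝ)*θ)) > 0 := by
      have := mul_pos hsl hsm
      rw [zpow_add₀ (by norm_num : (-1:ℝ) ≠ 0)]
      nlinarith
    have hodd : Odd (l + m) := by
      rcases Int.even_or_odd (l+m) with he | ho
      · exfalso
        rw [he.neg_one_zpow] at hsign
        nlinarith
      · exact ho
    -- m ≤ l ≤ m+1
    have h1 : m ≤ l := by
      have : (0:ℝ) < ((l:ℝ)+1-m) * π := by nlinarith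
      have : (0:ℝ) < (l:ℝ)+1-m := by by_contra hc; push_neg at hc; nlinarith
      have : (m:ℝ) < l + 1 := by linarith
      exact_mod_cast Int.lt_add_one_iff.mp (by exact_mod_cast this)
    have h2 : l ≤ m + 1 := by
      have hx : ((l:ℝ)-m-1) * π < π := by nlinarith
      have : (l:ℝ) - m - 1 < 1 := by nlinarith
      have : (l:ℝ) < m + 2 := by linarith
      have := (by exact_mod_cast this : l < m + 2)
      omega
    have hlm : l = m + 1 := by
      obtain ⟨n, hn⟩ := hodd; omega
    have hm0 : 0 ≤ m := by
      apply Int.floor_nonneg.mpr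
      positivity
    have hlk : l ≤ (k:ℤ) - 1 := by
      have hx1 : (l:ℝ) * π < (k:ℝ) * π := lt_trans hl1 (by nlinarith)
      have hx2 : (l:ℝ) < k := (mul_lt_mul_iff_of_pos_right hπ).mp hx1
      have hx3 : l < (k:ℤ) := by exact_mod_cast hx2
      omega
    refine ⟨l.toNat, ⟨?_, ?_⟩, ?_, ?_⟩
    · omega
    · omega
    · have hc : ((l.toNat : ℕ) : ℝ) = (l:ℝ) := by
        have : (0:ℤ) ≤ l := by omega
        exact_mod_cast Int.toNat_of_nonneg this
      rw [hc, div_lt_iff₀ hkR]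
      linarith
    · have hc : ((l.toNat : ℕ) : ℝ) = (l:ℝ) := by
        have : (0:ℤ) ≤ l := by omega
        exact_mod_cast Int.toNat_of_nonneg this
      rw [hc, lt_div_iff₀ hk1R]
      have : (m:ℝ) + 1 = l := by exact_mod_cast hlm.symm
      nlinarith
  · rintro ⟨l, ⟨hl1, hl2⟩, hθ1, hθ2⟩
    have hlR : (1:ℝ) ≤ l := by exact_mod_cast hl1
    have hlk : (l:ℝ) ≤ (k:ℝ) - 1 := by
      have : (l:ℕ) ≤ k - 1 := hl2
      have h' : ((l:ℕ):ℝ) ≤ ((k-1:ℕ):ℝ) := by exact_mod_cast this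
      rwa [Nat.cast_sub (by omega), Nat.cast_one] at h'
    have hθ0 : 0 < θ := lt_trans (by positivity) hθ1
    have hθπ : θ < π := by
      calc θ < (l:ℝ) * π / ((k:ℝ)-1) := hθ2
        _ ≤ ((k:ℝ)-1) * π / ((k:ℝ)-1) := by
            gcongr
        _ = π := by field_simp
    refine ⟨⟨hθ0, hθπ⟩, ?_⟩
    have hb1 : ((l:ℤ):ℝ) * π < (k:ℝ) * θ := by
      have := (div_lt_iff₀ hkR).mp hθ1
      push_cast
      nlinarith
    have hb2 : (k:ℝ) * θ < (((l:ℤ):ℝ) + 1) * π := by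
      have h1 : (k:ℝ) * θ < (k:ℝ) * ((l:ℝ) * π / ((k:ℝ)-1)) := by
        apply mul_lt_mul_of_pos_left hθ2 hkR
      have h2 : (k:ℝ) * ((l:ℝ) * π / ((k:ℝ)-1)) ≤ ((l:ℝ) + 1) * π := by
        rw [mul_div_assoc', div_le_iff₀ hk1R]
        nlinarith [mul_nonneg (sub_nonneg.mpr hlk) hπ.le]
      push_cast
      linarith
    have hb3 : (((l:ℤ) - 1 : ℤ):ℝ) * π < ((k:ℝ)-1) * θ := by
      have h1 : ((k:ℝ)-1) * ((l:ℝ) * π / (k:ℝ)) < ((k:ℝ)-1) * θ := by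
        apply mul_lt_mul_of_pos_left hθ1 hk1R
      have h2 : ((l:ℝ) - 1) * π ≤ ((k:ℝ)-1) * ((l:ℝ) * π / (k:ℝ)) := by
        rw [mul_div_assoc', le_div_iff₀ hkR]
        nlinarith [mul_nonneg (sub_nonneg.mpr hlk) hπ.le]
      push_cast
      linarith
    have hb4 : ((k:ℝ)-1) * θ < (((l:ℤ) - 1 : ℤ):ℝ) * π + π := by
      have := (lt_div_iff₀ hk1R).mp hθ2
      push_cast
      nlinarith
    have hs1 := sign_sin_int (l:ℤ) ((k:ℝ)*θ) hb1 hb2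
    have hs2 := sign_sin_int ((l:ℤ)-1) (((k:ℝ)-1)*θ) hb3 (by push_cast at hb4 ⊢; linarith)
    have hoddpow : (-1:ℝ)^((l:ℤ) + ((l:ℤ)-1)) = -1 := Odd.neg_one_zpow ⟨(l:ℤ)-1, by ring⟩
    have hP : Real.sin ((k:ℝ)*θ) * Real.sin (((k:ℝ)-1)*θ) < 0 := by
      have hpos := mul_pos hs1 hs2
      have heq : (-1:ℝ)^((l:ℤ)) * Real.sin ((k:ℝ)*θ) * ((-1:ℝ)^((l:ℤ)-1) * Real.sin (((k:ℝ)-1)*θ))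
          = (-1:ℝ)^((l:ℤ) + ((l:ℤ)-1)) * (Real.sin ((k:ℝ)*θ) * Real.sin (((k:ℝ)-1)*θ)) := by
        rw [zpow_add₀ (by norm_num : (-1:ℝ) ≠ 0)]
        ring
      rw [heq, hoddpow] at hpos
      linarith
    exact div_neg_iff.mpr (mul_neg_iff.mp hP)
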